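/- If x is a P-position of Moore's NIM game NIM(n,k), then k+1 divides the total number of stones S(x) = Σ_{i=1}^n x_i, and the Smith remoteness value satisfies R(x) = 2·S(x)/(k+1). -/

import Mathlib

/-- Smith's remoteness function for an impartial game with move relation `mv`. -/
def IsRemoteness {α : Type*} (mv : α → α → Prop) (R : α → ℕ) : Prop :=
  ∀ x : α,
    ((∀ y, ¬ mv x y) → R x = 0) ∧
    ((∃ y, mv x y ∧ Even (R y)) →
      ∃ y, mv x y ∧ Even (R y) ∧ R x = R y + 1 ∧ ∀ z, mv x z → Even (R z) → R y ≤ R z) ∧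
    ((∃ y, mv x y) → (∀ y, mv x y → ¬ Even (R y)) →
      ∃ y, mv x y ∧ R x = R y + 1 ∧ ∀ z, mv x z → R z ≤ R y)

/-- A move of Moore's NIM game NIM(n,k): strictly decrease the piles in some
nonempty set of at most `k` indices, leaving all other piles unchanged. -/
def MooreMove {ι : Type*} [Fintype ι] (k : ℕ) (x y : ι → ℕ) : Prop :=
  (∀ i, y i ≤ x i) ∧ y ≠ x ∧ (Finset.univ.filter fun i => y i < x i).card ≤ k

namespace MooreAux

/-- bit `j` of `m`. -/
def bit (j m : ℕ) : ℕ := m / 2 ^ j % 2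

lemma bit_le_one (j m : ℕ) : bit j m ≤ 1 := Nat.lt_succ_iff.1 (Nat.mod_lt _ (by norm_num))

lemma bit_eq_zero_of_lt {j m : ℕ} (h : m < 2 ^ j) : bit j m = 0 := by
  simp [bit, Nat.div_eq_of_lt h]

lemma two_pow_le_of_bit {j m : ℕ} (h : bit j m ≠ 0) : 2 ^ j ≤ m := by
  by_contra hc; exact h (bit_eq_zero_of_lt (by omega))

lemma div_pow_succ (j m : ℕ) : m / 2 ^ (j + 1) = m / 2 ^ j / 2 := by
  rw [Nat.div_div_eq_div_mul, pow_succ]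

/-- sum of bits below `B` recovers `m % 2^B`. -/
lemma sum_bit_mod (B m : ℕ) : ∑ j ∈ Finset.range B, 2 ^ j * bit j m = m % 2 ^ B := by
  induction B with
  | zero => simp [Nat.mod_one]
  | succ B ih => rw [Finset.sum_range_succ, ih, Nat.mod_pow_succ]; ring_nf; rfl

lemma sum_bit (B m : ℕ) (h : m < 2 ^ B) : ∑ j ∈ Finset.range B, 2 ^ j * bit j m = m := by
  rw [sum_bit_mod, Nat.mod_eq_of_lt h]

/-- if prefixes above j agree, bits above j agree. -/
lemma div_eq_of_div_eq {a b j j' : ℕ} (h : a / 2 ^ j = b / 2 ^ j) (hj : j ≤ j') :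
    a / 2 ^ j' = b / 2 ^ j' := by
  obtain ⟨d, rfl⟩ := Nat.exists_eq_add_of_le hj
  rw [pow_add, ← Nat.div_div_eq_div_mul, ← Nat.div_div_eq_div_mul, h]

lemma bit_eq_of_div_eq {a b j j' : ℕ} (h : a / 2 ^ (j + 1) = b / 2 ^ (j + 1)) (hj : j < j') :
    bit j' a = bit j' b := by
  unfold bit; rw [div_eq_of_div_eq h hj]

lemma lt_of_div_lt {a b j : ℕ} (h : a / 2 ^ j < b / 2 ^ j) : a < b := by
  by_contra hc
  exact absurd (Nat.div_le_div_right (le_of_not_gt hc)) (not_le.2 h)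

/-- highest differing bit. -/
lemma exists_high_bit {a b : ℕ} (h : a < b) :
    ∃ j, a / 2 ^ (j + 1) = b / 2 ^ (j + 1) ∧ bit j a = 0 ∧ bit j b = 1 ∧ a / 2 ^ j < b / 2 ^ j := by
  classical
  set P : ℕ → Prop := fun j => a / 2 ^ j ≠ b / 2 ^ j with hP
  have h0 : P 0 := by simpa [P] using h.ne
  set j := Nat.findGreatest P b with hj
  have hPj : P j := Nat.findGreatest_spec (Nat.zero_le b) h0
  have hsucc : a / 2 ^ (j + 1) = b / 2 ^ (j + 1) := by
    by_cases hle : j + 1 ≤ b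
    · by_contra hne
      have := Nat.le_findGreatest (P := P) hle hne
      omega
    · have hb : b < 2 ^ (j + 1) := lt_of_lt_of_le ((Nat.lt_two_pow_self (n := b))) (Nat.pow_le_pow_right (by norm_num) (by omega))
      rw [Nat.div_eq_of_lt (lt_of_lt_of_le h hb.le), Nat.div_eq_of_lt hb]
  refine ⟨j, hsucc, ?_⟩
  have h1 : a / 2 ^ (j+1) = a / 2 ^ j / 2 := div_pow_succ j a
  have h2 : b / 2 ^ (j+1) = b / 2 ^ j / 2 := div_pow_succ j b
  have hlt : a / 2 ^ j < b / 2 ^ j := by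
    rcases lt_trichotomy (a / 2 ^ j) (b / 2 ^ j) with h' | h' | h'
    · exact h'
    · exact absurd h' hPj
    · exfalso
      have hb' : b < 2 ^ j * (b / 2 ^ j + 1) := Nat.lt_mul_div_succ b (by positivity)
      have h2' : 2 ^ j * (b / 2 ^ j + 1) ≤ 2 ^ j * (a / 2 ^ j) :=
        Nat.mul_le_mul_left _ (by omega)
      have h3' : 2 ^ j * (a / 2 ^ j) ≤ a := Nat.mul_div_le a (2 ^ j)
      omega
  have ha := Nat.div_add_mod (a / 2 ^ j) 2
  have hb := Nat.div_add_mod (b / 2 ^ j) 2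
  have hma : a / 2 ^ j % 2 < 2 := Nat.mod_lt _ (by norm_num)
  have hmb : b / 2 ^ j % 2 < 2 := Nat.mod_lt _ (by norm_num)
  have key : a / 2 ^ j / 2 = b / 2 ^ j / 2 := by rw [← h1, ← h2, hsucc]
  unfold bit
  omega

lemma exists_bit_one {m : ℕ} (h : m ≠ 0) : ∃ j, bit j m = 1 := by
  by_contra hc
  push_neg at hc
  have hz : ∀ j, bit j m = 0 := fun j => by have := bit_le_one j m; have := hc j; omega
  have := sum_bit m m ((Nat.lt_two_pow_self (n := m)))
  simp [hz] at this
  exact h this.symm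

lemma two_pow_dvd_of_bits {t m : ℕ} (h : ∀ j < t, bit j m = 0) : 2 ^ t ∣ m := by
  induction t with
  | zero => simp
  | succ t ih =>
    obtain ⟨q, rfl⟩ := ih (fun j hj => h j (by omega))
    have hb := h t (by omega)
    unfold bit at hb
    rw [Nat.mul_div_cancel_left _ (by positivity : (0:ℕ) < 2 ^ t)] at hb
    obtain ⟨q', rfl⟩ := Nat.dvd_of_mod_eq_zero hb
    exact ⟨q', by ring⟩

/-- bits of `m - 1` when `t` is the lowest set bit of `m`:
below `t` they are 1, at `t` it is 0, above `t` unchanged. -/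
lemma pred_bits {m t : ℕ} (hm : m ≠ 0) (ht : bit t m = 1) (hlow : ∀ j < t, bit j m = 0) :
    (∀ j < t, bit j (m - 1) = 1) ∧ bit t (m - 1) = 0 ∧
      (m - 1) / 2 ^ (t + 1) = m / 2 ^ (t + 1) := by
  obtain ⟨u, rfl⟩ := two_pow_dvd_of_bits hlow
  have hu : u % 2 = 1 := by
    unfold bit at ht
    rwa [Nat.mul_div_cancel_left _ (by positivity : (0:ℕ) < 2 ^ t)] at ht
  have hu0 : u ≠ 0 := by rintro rfl; simp at hm
  obtain ⟨v, hv⟩ : ∃ v, u = 2 * v + 1 := ⟨u / 2, by omega⟩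
  subst hv
  refine ⟨?_, ?_, ?_⟩
  · intro j hj
    set p : ℕ := 2 ^ j with hp
    set w : ℕ := 2 ^ (t - j - 1) * (2 * v + 1) with hw
    have hp1 : 1 ≤ p := Nat.one_le_two_pow
    have hw1 : 1 ≤ w := Nat.one_le_iff_ne_zero.2 (by positivity)
    have hmeq : 2 ^ t * (2 * v + 1) = p * (2 * w) := by
      have ht' : t = j + 1 + (t - j - 1) := by omega
      rw [hp, hw]
      nth_rewrite 1 [ht']
      rw [pow_add, pow_add]
      ring
    have h1 : p * (2 * w) = p * (2 * w - 1) + p := by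
      have hsub : p * (2 * w - 1) = p * (2 * w) - p := by rw [Nat.mul_sub, mul_one]
      have hge : p ≤ p * (2 * w) := Nat.le_mul_of_pos_right p (by omega)
      omega
    have h2 : 2 ^ t * (2 * v + 1) - 1 = (p - 1) + p * (2 * w - 1) := by omega
    unfold bit
    rw [h2, ← hp, Nat.add_mul_div_left _ _ (by omega : 0 < p),
      Nat.div_eq_of_lt (by omega)]
    omega
  · have h1 : 1 ≤ (2:ℕ) ^ t := Nat.one_le_two_pow
    have h2 : 2 ^ t * (2 * v + 1) - 1 = (2 ^ t - 1) + 2 ^ t * (2 * v) := by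
      have : 2 ^ t * (2 * v + 1) = 2 ^ t * (2 * v) + 2 ^ t := by ring
      omega
    unfold bit
    rw [h2, Nat.add_mul_div_left _ _ (by positivity : (0:ℕ) < 2 ^ t), Nat.div_eq_of_lt (by omega)]
    omega
  · have h1 : 1 ≤ (2:ℕ) ^ t := Nat.one_le_two_pow
    have hml : 2 ^ t * (2 * v + 1) - 1 = (2 ^ t - 1) + 2 ^ (t+1) * v := by
      rw [pow_succ]; ring_nf; omega
    have hmr : 2 ^ t * (2 * v + 1) = 2 ^ t + 2 ^ (t+1) * v := by
      rw [pow_succ]; ring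
    have hpos1 : (0:ℕ) < 2 ^ (t+1) := by positivity
    rw [hml, hmr, Nat.add_mul_div_left _ _ hpos1, Nat.add_mul_div_left _ _ hpos1,
      Nat.div_eq_of_lt (by rw [pow_succ]; omega),
      Nat.div_eq_of_lt (by rw [pow_succ]; omega)]


/-! ### vector-level facts -/

variable {n k : ℕ}

/-- P-position predicate: every binary digit sum is divisible by `k+1`. -/
def PP (k : ℕ) {n : ℕ} (x : Fin n → ℕ) : Prop := ∀ j, (k + 1) ∣ ∑ i, bit j (x i)

lemma sum_eq_sum_bits (B : ℕ) (x : Fin n → ℕ) (h : ∀ i, x i < 2 ^ B) :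
    ∑ i, x i = ∑ j ∈ Finset.range B, 2 ^ j * ∑ i, bit j (x i) := by
  calc ∑ i, x i = ∑ i, ∑ j ∈ Finset.range B, 2 ^ j * bit j (x i) := by
        refine Finset.sum_congr rfl fun i _ => ?_
        rw [sum_bit B (x i) (h i)]
      _ = ∑ j ∈ Finset.range B, 2 ^ j * ∑ i, bit j (x i) := by
        rw [Finset.sum_comm]
        exact Finset.sum_congr rfl fun j _ => (Finset.mul_sum _ _ _).symm

lemma exists_bound (x : Fin n → ℕ) : ∃ B, ∀ i, x i < 2 ^ B := by
  refine ⟨∑ i, x i, fun i => lt_of_le_of_lt ?_ Nat.lt_two_pow_self⟩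
  exact Finset.single_le_sum (fun i _ => Nat.zero_le (x i)) (Finset.mem_univ i)

lemma PP_dvd_sum {x : Fin n → ℕ} (hx : PP k x) : (k + 1) ∣ ∑ i, x i := by
  obtain ⟨B, hB⟩ := exists_bound x
  rw [sum_eq_sum_bits B x hB]
  exact Finset.dvd_sum fun j _ => Dvd.dvd.mul_left (hx j) _

lemma dsum_eq_zero_of_bound {x : Fin n → ℕ} {B j : ℕ} (hB : ∀ i, x i < 2 ^ B) (hj : B ≤ j) :
    ∑ i, bit j (x i) = 0 := by
  refine Finset.sum_eq_zero fun i _ => bit_eq_zero_of_lt ?_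
  exact lt_of_lt_of_le (hB i) (Nat.pow_le_pow_right (by norm_num) hj)

/-- Core counting lemma: if `z ≤ x` pointwise with at most `c` changed coordinates
(`c = ` card of changed set), then at the top changed bit `J`,
`∑ bit J x = ∑ bit J z + cJ` with `1 ≤ cJ ≤ c`. -/
lemma top_bit_count {x z : Fin n → ℕ} (hle : ∀ i, z i ≤ x i) (hne : z ≠ x) :
    ∃ J cJ, (∑ i, bit J (x i)) = (∑ i, bit J (z i)) + cJ ∧ 1 ≤ cJ ∧
      cJ ≤ (Finset.univ.filter fun i => z i < x i).card ∧
      (cJ = (Finset.univ.filter fun i => z i < x i).card →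
        ∀ i, z i < x i → bit J (x i) = 1 ∧ bit J (z i) = 0) := by
  classical
  set D := Finset.univ.filter fun i => z i < x i with hD
  have hDne : D.Nonempty := by
    by_contra hc
    rw [Finset.not_nonempty_iff_eq_empty] at hc
    apply hne; funext i
    by_contra hzi
    have : i ∈ D := by
      simp only [hD, Finset.mem_filter, Finset.mem_univ, true_and]
      exact lt_of_le_of_ne (hle i) hzi
    simp [hc] at this
  -- choose per-pile top differing bit
  have hch : ∀ i, ∃ j, z i < x i →
      (z i / 2 ^ (j+1) = x i / 2 ^ (j+1) ∧ bit j (z i) = 0 ∧ bit j (x i) = 1) := by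
    intro i
    by_cases hi : z i < x i
    · obtain ⟨j, h1, h2, h3, _⟩ := exists_high_bit hi
      exact ⟨j, fun _ => ⟨h1, h2, h3⟩⟩
    · exact ⟨0, fun h => absurd h hi⟩
  choose f hf using hch
  set J := (D.image f).max' (hDne.image f) with hJ
  have hJmem : ∃ i ∈ D, f i = J := by
    obtain ⟨i, hi, hfi⟩ := Finset.mem_image.1 ((D.image f).max'_mem (hDne.image f))
    exact ⟨i, hi, hfi⟩
  have hJmax : ∀ i ∈ D, f i ≤ J := fun i hi =>
    Finset.le_max' _ _ (Finset.mem_image_of_mem f hi)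
  -- pointwise comparison at bit J
  have hpt : ∀ i, bit J (x i) = bit J (z i) + (if z i < x i ∧ f i = J then 1 else 0) := by
    intro i
    by_cases hi : z i < x i
    · obtain ⟨h1, h2, h3⟩ := hf i hi
      by_cases hfi : f i = J
      · simp only [hi, hfi, true_and, if_pos]
        rw [← hfi, h2, h3]
      · have hlt : f i < J := lt_of_le_of_ne (hJmax i (by simp [hD, hi])) hfi
        rw [bit_eq_of_div_eq h1 hlt]
        simp [hi, hfi]
    · have : z i = x i := le_antisymm (hle i) (le_of_not_gt hi)
      simp [this, hi]
  set cJ := (Finset.univ.filter fun i => z i < x i ∧ f i = J).card with hcJ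
  refine ⟨J, cJ, ?_, ?_, ?_, ?_⟩
  · rw [Finset.sum_congr rfl fun i _ => hpt i, Finset.sum_add_distrib]
    congr 1
    rw [hcJ, Finset.card_filter]
  · obtain ⟨i, hi, hfi⟩ := hJmem
    have : i ∈ Finset.univ.filter fun i => z i < x i ∧ f i = J := by
      simp only [Finset.mem_filter, Finset.mem_univ, true_and]
      exact ⟨(Finset.mem_filter.1 hi).2, hfi⟩
    exact Finset.card_pos.2 ⟨i, this⟩
  · apply Finset.card_le_card
    intro i hi
    simp only [hD, Finset.mem_filter, Finset.mem_univ, true_and] at hi ⊢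
    exact hi.1
  · intro hcard i hi
    have hsub : (Finset.univ.filter fun i => z i < x i ∧ f i = J) ⊆ D := by
      intro i hi
      simp only [hD, Finset.mem_filter, Finset.mem_univ, true_and] at hi ⊢
      exact hi.1
    have heq : (Finset.univ.filter fun i => z i < x i ∧ f i = J) = D :=
      Finset.eq_of_subset_of_card_le hsub (le_of_eq hcard.symm)
    have hiD : i ∈ D := by simp [hD, hi]
    rw [← heq] at hiD
    have hfiJ : f i = J := (Finset.mem_filter.1 hiD).2.2
    obtain ⟨_, h2, h3⟩ := hf i hi
    rw [hfiJ] at h2 h3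
    exact ⟨h3, h2⟩

/-- There is no move between two P-positions (with at most `k` changed piles). -/
lemma no_PP_move {x z : Fin n → ℕ} (hx : PP k x) (hz : PP k z)
    (hle : ∀ i, z i ≤ x i) (hne : z ≠ x)
    (hcard : (Finset.univ.filter fun i => z i < x i).card ≤ k) : False := by
  obtain ⟨J, cJ, hsum, h1, h2, _⟩ := top_bit_count hle hne
  have hdx := hx J
  have hdz := hz J
  have : (k + 1) ∣ cJ := (Nat.dvd_add_right hdz).1 (hsum ▸ hdx)
  have := Nat.le_of_dvd (by omega) this
  omega


/-! ### mkval: surgery on bit j -/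

/-- value whose bits above `j` agree with `m`, bit `j` is `b`, bits below `j` are 0. -/
def mkval (j b m : ℕ) : ℕ := (m / 2 ^ (j + 1) * 2 + b) * 2 ^ j

lemma div_bit_decomp (j m : ℕ) : m / 2 ^ j = m / 2 ^ (j + 1) * 2 + bit j m := by
  rw [div_pow_succ]
  have := Nat.div_add_mod (m / 2 ^ j) 2
  unfold bit
  omega

lemma mkval_div_self (j b m : ℕ) : mkval j b m / 2 ^ j = m / 2 ^ (j + 1) * 2 + b := by
  unfold mkval
  exact Nat.mul_div_cancel _ (by positivity)

lemma mkval_div_succ (j b m : ℕ) (hb : b ≤ 1) : mkval j b m / 2 ^ (j + 1) = m / 2 ^ (j + 1) := by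
  rw [div_pow_succ, mkval_div_self]
  omega

lemma mkval_bit (j b m : ℕ) (hb : b ≤ 1) : bit j (mkval j b m) = b := by
  unfold bit
  rw [mkval_div_self]
  omega

/-- Key construction lemma: given freedom on the piles of `A` below bit `j`, and digit
sums divisible by `k+1` at all bits `≥ j`, we can complete to a full P-position. -/
lemma key : ∀ (j : ℕ) (x : Fin n → ℕ) (A : Finset (Fin n)), A.card ≤ k →
    (∀ j', j ≤ j' → (k + 1) ∣ ∑ i, bit j' (x i)) →
    ∃ (y : Fin n → ℕ) (A' : Finset (Fin n)), A ⊆ A' ∧ A'.card ≤ k ∧ PP k y ∧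
      (∀ i, y i / 2 ^ j = x i / 2 ^ j) ∧ (∀ i, i ∉ A' → y i = x i) ∧
      (∀ i, i ∈ A' → i ∉ A → y i < x i) := by
  intro j
  induction j with
  | zero =>
    intro x A hA hdvd
    exact ⟨x, A, subset_refl A, hA, fun j' => hdvd j' (Nat.zero_le j'), fun i => rfl,
      fun i _ => rfl, fun i hi hni => absurd hi hni⟩
  | succ j ih =>
    intro x A hA hdvd
    classical
    set s := ∑ i ∈ Aᶜ, bit j (x i) with hs
    set r := s % (k + 1) with hr
    set t := if r = 0 then 0 else (k + 1) - r with ht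
    have hrk : r < k + 1 := Nat.mod_lt _ (by omega)
    have hsq := Nat.div_add_mod s (k + 1)
    by_cases hcase : t ≤ A.card
    -- Case 1: adjust using only already-active piles
    · obtain ⟨T, hTsub, hTcard⟩ := Finset.exists_subset_card_eq hcase
      set x' : Fin n → ℕ := fun i =>
        if i ∈ T then mkval j 1 (x i) else if i ∈ A then mkval j 0 (x i) else x i with hx'
      have hpre : ∀ i, x' i / 2 ^ (j + 1) = x i / 2 ^ (j + 1) := by
        intro i
        simp only [hx']
        split_ifs with h1 h2
        · exact mkval_div_succ j 1 (x i) le_rfl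
        · exact mkval_div_succ j 0 (x i) (by norm_num)
        · rfl
      have hoff : ∀ i, i ∉ A → x' i = x i := by
        intro i hi
        simp only [hx']
        rw [if_neg (fun h => hi (hTsub h)), if_neg hi]
      have hdj : ∑ i, bit j (x' i) = t + s := by
        rw [← Finset.sum_add_sum_compl A]
        have hA1 : ∑ i ∈ A, bit j (x' i) = t := by
          have hcong : ∀ i ∈ A, bit j (x' i) = if i ∈ T then 1 else 0 := by
            intro i hi
            simp only [hx']
            by_cases h1 : i ∈ T
            · rw [if_pos h1, if_pos h1]; exact mkval_bit j 1 (x i) le_rfl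
            · rw [if_neg h1, if_pos hi, if_neg h1]; exact mkval_bit j 0 (x i) (by norm_num)
          rw [Finset.sum_congr rfl hcong, ← Finset.card_filter,
            Finset.filter_mem_eq_inter, Finset.inter_eq_right.2 hTsub, hTcard]
        have hA2 : ∑ i ∈ Aᶜ, bit j (x' i) = s := by
          refine Finset.sum_congr rfl fun i hi => ?_
          rw [hoff i (Finset.mem_compl.1 hi)]
        rw [hA1, hA2]
      have hdvdj : (k + 1) ∣ (t + s) := by
        have h1 : t + s = (k + 1) * (s / (k + 1)) + (r + t) := by omega
        rw [h1]
        refine dvd_add (Dvd.intro _ rfl) ?_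
        by_cases h0 : r = 0
        · simp [ht, h0]
        · rw [ht, if_neg h0]; exact ⟨1, by omega⟩
      have hdvd' : ∀ j', j ≤ j' → (k + 1) ∣ ∑ i, bit j' (x' i) := by
        intro j' hj'
        rcases Nat.eq_or_lt_of_le hj' with rfl | hlt
        · rw [hdj]; exact hdvdj
        · have heq : ∑ i, bit j' (x' i) = ∑ i, bit j' (x i) :=
            Finset.sum_congr rfl fun i _ => bit_eq_of_div_eq (hpre i) hlt
          rw [heq]; exact hdvd j' (by omega)
      obtain ⟨y, A'', hsub, hcard, hPPy, hpre', hoff', hnew⟩ := ih x' A hA hdvd'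
      refine ⟨y, A'', hsub, hcard, hPPy, ?_, ?_, ?_⟩
      · intro i
        rw [div_eq_of_div_eq (hpre' i) (Nat.le_succ j), hpre i]
      · intro i hi
        rw [hoff' i hi, hoff i (fun h => hi (hsub h))]
      · intro i hi hni
        have := hnew i hi hni
        rwa [hoff i hni] at this
    -- Case 2: activate r new piles with bit j equal to 1
    · have hr0 : r ≠ 0 := by
        intro h; rw [ht, if_pos h] at hcase; omega
      have htval : t = k + 1 - r := by rw [ht, if_neg hr0]
      have hck : A.card + r ≤ k := by omega
      set W := Aᶜ.filter (fun i => bit j (x i) = 1) with hW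
      have hWcard : W.card = s := by
        rw [hW, Finset.card_filter, hs]
        refine Finset.sum_congr rfl fun i _ => ?_
        have := bit_le_one j (x i)
        split_ifs with h <;> omega
      have hrs : r ≤ s := hr ▸ Nat.mod_le s (k + 1)
      obtain ⟨U, hUsub, hUcard⟩ := Finset.exists_subset_card_eq (le_trans hrs hWcard.ge)
      have hUc : ∀ i ∈ U, i ∈ Aᶜ := fun i hi => Finset.mem_of_mem_filter i (hUsub hi)
      have hUbit : ∀ i ∈ U, bit j (x i) = 1 := fun i hi =>
        (Finset.mem_filter.1 (hUsub hi)).2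
      have hdisj : Disjoint A U :=
        Finset.disjoint_left.2 fun a ha hat => (Finset.mem_compl.1 (hUc a hat)) ha
      have hAUcard : (A ∪ U).card = A.card + r := by
        rw [Finset.card_union_of_disjoint hdisj, hUcard]
      set x' : Fin n → ℕ := fun i => if i ∈ A ∪ U then mkval j 0 (x i) else x i with hx'
      have hpre : ∀ i, x' i / 2 ^ (j + 1) = x i / 2 ^ (j + 1) := by
        intro i
        simp only [hx']
        split_ifs with h1
        · exact mkval_div_succ j 0 (x i) (by norm_num)
        · rfl
      have hoff : ∀ i, i ∉ A ∪ U → x' i = x i := by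
        intro i hi
        simp only [hx']
        rw [if_neg hi]
      have hdj : ∑ i, bit j (x' i) = s - r := by
        rw [← Finset.sum_add_sum_compl (A ∪ U)]
        have hA1 : ∑ i ∈ A ∪ U, bit j (x' i) = 0 := by
          refine Finset.sum_eq_zero fun i hi => ?_
          simp only [hx']
          rw [if_pos hi]
          exact mkval_bit j 0 (x i) (by norm_num)
        have hA2 : ∑ i ∈ (A ∪ U)ᶜ, bit j (x' i) = s - r := by
          have hcomp : (A ∪ U)ᶜ = Aᶜ \ U := by
            ext a
            simp only [Finset.mem_compl, Finset.mem_union, Finset.mem_sdiff]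
            tauto
          have hsplit : ∑ i ∈ Aᶜ \ U, bit j (x i) + ∑ i ∈ U, bit j (x i) = s := by
            rw [hs]
            exact Finset.sum_sdiff (fun i hi => hUc i hi)
          have hUsum : ∑ i ∈ U, bit j (x i) = r := by
            rw [Finset.sum_congr rfl hUbit, Finset.sum_const, smul_eq_mul, mul_one, hUcard]
          have hcong : ∑ i ∈ (A ∪ U)ᶜ, bit j (x' i) = ∑ i ∈ (A ∪ U)ᶜ, bit j (x i) :=
            Finset.sum_congr rfl fun i hi => by rw [hoff i (Finset.mem_compl.1 hi)]
          rw [hcong, hcomp]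
          omega
        rw [hA1, hA2]
        omega
      have hdvdj : (k + 1) ∣ (s - r) := by
        have h1 : s - r = (k + 1) * (s / (k + 1)) := by omega
        rw [h1]
        exact Dvd.intro _ rfl
      have hdvd' : ∀ j', j ≤ j' → (k + 1) ∣ ∑ i, bit j' (x' i) := by
        intro j' hj'
        rcases Nat.eq_or_lt_of_le hj' with rfl | hlt
        · rw [hdj]; exact hdvdj
        · have heq : ∑ i, bit j' (x' i) = ∑ i, bit j' (x i) :=
            Finset.sum_congr rfl fun i _ => bit_eq_of_div_eq (hpre i) hlt
          rw [heq]; exact hdvd j' (by omega)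
      obtain ⟨y, A'', hsub, hcard, hPPy, hpre', hoff', hnew⟩ :=
        ih x' (A ∪ U) (by omega) hdvd'
      refine ⟨y, A'', le_trans Finset.subset_union_left hsub, hcard, hPPy, ?_, ?_, ?_⟩
      · intro i
        rw [div_eq_of_div_eq (hpre' i) (Nat.le_succ j), hpre i]
      · intro i hi
        rw [hoff' i hi, hoff i (fun h => hi (hsub h))]
      · intro i hi hni
        by_cases hiU : i ∈ U
        · have h1 : y i / 2 ^ j = x' i / 2 ^ j := hpre' i
          have h2 : x' i / 2 ^ j = x i / 2 ^ (j + 1) * 2 := by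
            simp only [hx']
            rw [if_pos (Finset.mem_union_right A hiU), mkval_div_self]
            omega
          have h4 : x i / 2 ^ j = x i / 2 ^ (j + 1) * 2 + 1 := by
            have := div_bit_decomp j (x i)
            rw [hUbit i hiU] at this
            exact this
          exact lt_of_div_lt (by omega : y i / 2 ^ j < x i / 2 ^ j)
        · have hni' : i ∉ A ∪ U := fun h => by
            rcases Finset.mem_union.1 h with h | h
            exacts [hni h, hiU h]
          have := hnew i hi hni'
          rwa [hoff i hni'] at this


/-- From a non-P-position there is a Moore move to a P-position. -/
lemma exists_PP_move (hk : 0 < k) {x : Fin n → ℕ} (hx : ¬ PP k x) :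
    ∃ y, (∀ i, y i ≤ x i) ∧ y ≠ x ∧
      (Finset.univ.filter fun i => y i < x i).card ≤ k ∧ PP k y := by
  classical
  obtain ⟨B, hB⟩ := exists_bound x
  set Q : ℕ → Prop := fun j => ¬ (k + 1) ∣ ∑ i, bit j (x i) with hQ
  have hQex : ∃ j, Q j := by
    unfold PP at hx; push_neg at hx; exact hx
  obtain ⟨j0, hj0⟩ := hQex
  have hQbound : ∀ j, Q j → j < B := by
    intro j hj
    by_contra h
    exact hj (by rw [dsum_eq_zero_of_bound hB (le_of_not_gt h)]; exact dvd_zero _)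
  set J := Nat.findGreatest Q B with hJ
  have hQJ : Q J := Nat.findGreatest_spec (le_of_lt (hQbound j0 hj0)) hj0
  have hhi : ∀ j', J < j' → (k + 1) ∣ ∑ i, bit j' (x i) := by
    intro j' hj'
    by_cases h : j' ≤ B
    · by_contra hc
      exact Nat.findGreatest_is_greatest hj' h hc
    · rw [dsum_eq_zero_of_bound hB (by omega)]; exact dvd_zero _
  set s := ∑ i, bit J (x i) with hs
  set r := s % (k + 1) with hr
  have hr0 : r ≠ 0 := fun h => hQJ (Nat.dvd_of_mod_eq_zero h)
  have hrk : r < k + 1 := Nat.mod_lt _ (by omega)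
  have hsq := Nat.div_add_mod s (k + 1)
  set W := Finset.univ.filter (fun i => bit J (x i) = 1) with hW
  have hWcard : W.card = s := by
    rw [hW, Finset.card_filter, hs]
    refine Finset.sum_congr rfl fun i _ => ?_
    have := bit_le_one J (x i)
    split_ifs with h <;> omega
  have hrs : r ≤ s := hr ▸ Nat.mod_le s (k + 1)
  obtain ⟨U, hUsub, hUcard⟩ := Finset.exists_subset_card_eq (le_trans hrs hWcard.ge)
  have hUbit : ∀ i ∈ U, bit J (x i) = 1 := fun i hi => (Finset.mem_filter.1 (hUsub hi)).2
  have hUne : U.Nonempty := Finset.card_pos.1 (by omega)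
  set x' : Fin n → ℕ := fun i => if i ∈ U then mkval J 0 (x i) else x i with hx'
  have hpre : ∀ i, x' i / 2 ^ (J + 1) = x i / 2 ^ (J + 1) := by
    intro i
    simp only [hx']
    split_ifs with h1
    · exact mkval_div_succ J 0 (x i) (by norm_num)
    · rfl
  have hoff : ∀ i, i ∉ U → x' i = x i := by
    intro i hi
    simp only [hx']
    rw [if_neg hi]
  have hUlt : ∀ i ∈ U, x' i / 2 ^ J < x i / 2 ^ J := by
    intro i hi
    have h2 : x' i / 2 ^ J = x i / 2 ^ (J + 1) * 2 := by
      simp only [hx']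
      rw [if_pos hi, mkval_div_self]
      omega
    have h4 : x i / 2 ^ J = x i / 2 ^ (J + 1) * 2 + 1 := by
      have := div_bit_decomp J (x i)
      rw [hUbit i hi] at this
      exact this
    omega
  have hdJ : ∑ i, bit J (x' i) = s - r := by
    rw [← Finset.sum_add_sum_compl U]
    have hA1 : ∑ i ∈ U, bit J (x' i) = 0 := by
      refine Finset.sum_eq_zero fun i hi => ?_
      simp only [hx']
      rw [if_pos hi]
      exact mkval_bit J 0 (x i) (by norm_num)
    have hUsum : ∑ i ∈ U, bit J (x i) = r := by
      rw [Finset.sum_congr rfl hUbit, Finset.sum_const, smul_eq_mul, mul_one, hUcard]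
    have hsplit : ∑ i ∈ U, bit J (x i) + ∑ i ∈ Uᶜ, bit J (x i) = s := by
      rw [hs]; exact Finset.sum_add_sum_compl U _
    have hA2 : ∑ i ∈ Uᶜ, bit J (x' i) = ∑ i ∈ Uᶜ, bit J (x i) :=
      Finset.sum_congr rfl fun i hi => by rw [hoff i (Finset.mem_compl.1 hi)]
    rw [hA1, hA2]
    omega
  have hdvd' : ∀ j', J ≤ j' → (k + 1) ∣ ∑ i, bit j' (x' i) := by
    intro j' hj'
    rcases Nat.eq_or_lt_of_le hj' with rfl | hlt
    · rw [hdJ]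
      have h1 : s - r = (k + 1) * (s / (k + 1)) := by omega
      rw [h1]; exact Dvd.intro _ rfl
    · have heq : ∑ i, bit j' (x' i) = ∑ i, bit j' (x i) :=
        Finset.sum_congr rfl fun i _ => bit_eq_of_div_eq (hpre i) hlt
      rw [heq]; exact hhi j' hlt
  obtain ⟨y, A', hsub, hcard, hPPy, hpre', hoff', hnew⟩ :=
    key J x' U (by omega) hdvd'
  have hyle : ∀ i, y i ≤ x i := by
    intro i
    by_cases hiU : i ∈ U
    · refine le_of_lt (lt_of_div_lt (j := J) ?_)
      rw [hpre' i]
      exact hUlt i hiU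
    · by_cases hiA : i ∈ A'
      · exact le_of_lt (by rw [← hoff i hiU]; exact hnew i hiA hiU)
      · rw [hoff' i hiA, hoff i hiU]
  have hylt : ∀ i ∈ U, y i < x i := by
    intro i hi
    refine lt_of_div_lt (j := J) ?_
    rw [hpre' i]
    exact hUlt i hi
  obtain ⟨i1, hi1⟩ := hUne
  refine ⟨y, hyle, ?_, ?_, hPPy⟩
  · intro h
    exact absurd (congrFun h i1) (Nat.ne_of_lt (hylt i1 hi1))
  · refine le_trans (Finset.card_le_card ?_) hcard
    intro i hi
    rw [Finset.mem_filter] at hi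
    by_contra hiA
    rw [hoff' i hiA, hoff i (fun h => hiA (hsub h))] at hi
    omega


lemma sum_two_pow (t : ℕ) : ∑ j ∈ Finset.range t, 2 ^ j + 1 = 2 ^ t := by
  induction t with
  | zero => simp
  | succ t ih => rw [Finset.sum_range_succ, pow_succ]; omega

lemma dvd_eq_of_close {m a b : ℕ} (hm : 0 < m) (ha : m ∣ a) (hb : m ∣ b)
    (h1 : a < b + m) (h2 : b < a + m) : a = b := by
  obtain ⟨p, rfl⟩ := ha
  obtain ⟨q, rfl⟩ := hb
  rcases lt_trichotomy p q with h | h | h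
  · have := Nat.mul_le_mul_left m (show p + 1 ≤ q by omega)
    rw [mul_add, mul_one] at this
    omega
  · rw [h]
  · have := Nat.mul_le_mul_left m (show q + 1 ≤ p by omega)
    rw [mul_add, mul_one] at this
    omega

lemma dvd_close_or {m a b : ℕ} (hm : 0 < m) (ha : m ∣ a) (hb : m ∣ b)
    (h1 : a ≤ b + m) (h2 : b < a + m) : a = b ∨ a = b + m := by
  obtain ⟨p, rfl⟩ := ha
  obtain ⟨q, rfl⟩ := hb
  rcases lt_trichotomy p q with h | h | h
  · have := Nat.mul_le_mul_left m (show p + 1 ≤ q by omega)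
    rw [mul_add, mul_one] at this
    omega
  · left; rw [h]
  · rcases Nat.eq_or_lt_of_le (show q + 1 ≤ p by omega) with h' | h'
    · right; rw [← h', mul_add, mul_one]
    · have := Nat.mul_le_mul_left m (show q + 2 ≤ p by omega)
      rw [mul_add] at this
      omega

lemma bit_zero (j : ℕ) : bit j 0 = 0 := by simp [bit]

/-- choose the nonzero pile with the lowest set bit. -/
lemma exists_min_pile {x : Fin n → ℕ} (hne : ∃ i, x i ≠ 0) :
    ∃ i0 t, x i0 ≠ 0 ∧ bit t (x i0) = 1 ∧ ∀ j < t, ∀ i, bit j (x i) = 0 := by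
  classical
  set NZ := Finset.univ.filter (fun i => x i ≠ 0) with hNZ
  have hNZne : NZ.Nonempty := by
    obtain ⟨i, hi⟩ := hne
    exact ⟨i, by simp [hNZ, hi]⟩
  set f : Fin n → ℕ := fun i => if h : x i = 0 then 0 else Nat.find (exists_bit_one h) with hf
  obtain ⟨i0, hi0NZ, hi0min⟩ := Finset.exists_min_image NZ f hNZne
  have hx0 : x i0 ≠ 0 := (Finset.mem_filter.1 hi0NZ).2
  refine ⟨i0, f i0, hx0, ?_, ?_⟩
  · simp only [hf, dif_neg hx0]
    exact Nat.find_spec (exists_bit_one hx0)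
  · intro j hj i
    by_cases hxi : x i = 0
    · rw [hxi]; exact bit_zero j
    · have hle : f i0 ≤ f i := hi0min i (by simp [hNZ, hxi])
      have hji : j < f i := lt_of_lt_of_le hj hle
      simp only [hf, dif_neg hxi] at hji
      have := Nat.find_min (exists_bit_one hxi) hji
      have := bit_le_one j (x i)
      omega

/-- Claim C: if from a P-position `x` the loser removes one stone from a pile with the
lowest set bit, then every P-position reachable by a Moore move removes exactly
`k+1` stones in total. -/
lemma stones_drop (hk : 0 < k) {x z : Fin n → ℕ} (hx : PP k x) (hz : PP k z)
    {i0 : Fin n} {t : ℕ} (hx0 : x i0 ≠ 0) (hbt : bit t (x i0) = 1)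
    (hmin : ∀ j < t, ∀ i, bit j (x i) = 0)
    (hley : ∀ i, z i ≤ Function.update x i0 (x i0 - 1) i)
    (hney : z ≠ Function.update x i0 (x i0 - 1))
    (hcardy : (Finset.univ.filter fun i =>
      z i < Function.update x i0 (x i0 - 1) i).card ≤ k) :
    ∑ i, x i = ∑ i, z i + (k + 1) := by
  classical
  set y := Function.update x i0 (x i0 - 1) with hy
  have hyi0 : y i0 = x i0 - 1 := Function.update_self i0 _ x
  have hyi : ∀ i, i ≠ i0 → y i = x i := fun i hi => Function.update_of_ne hi _ x
  have hle : ∀ i, z i ≤ x i := by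
    intro i
    by_cases h : i = i0
    · subst h; have := hley i; rw [hyi0] at this; omega
    · have := hley i; rwa [hyi i h] at this
  have hlt0 : z i0 < x i0 := by
    have := hley i0; rw [hyi0] at this; omega
  set D := Finset.univ.filter (fun i => z i < x i) with hD
  set T := Finset.univ.filter (fun i => z i < y i) with hT
  have hi0D : i0 ∈ D := by simp [hD, hlt0]
  have hDT : D ⊆ insert i0 T := by
    intro i hi
    rw [Finset.mem_insert]
    by_cases h : i = i0
    · exact Or.inl h
    · right
      rw [hT, Finset.mem_filter]
      rw [hD, Finset.mem_filter] at hi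
      exact ⟨Finset.mem_univ i, by rw [hyi i h]; exact hi.2⟩
  have hzx : z ≠ x := fun h => absurd (congrFun h i0) (Nat.ne_of_lt hlt0)
  have hDk : ¬ D.card ≤ k := fun h => no_PP_move hx hz hle hzx h
  have hDcard : D.card = k + 1 := by
    have := Finset.card_le_card hDT
    have := Finset.card_insert_le i0 T
    omega
  have hi0T : i0 ∉ T := by
    intro h
    have hsub : D ⊆ T := by
      intro i hi
      rcases Finset.mem_insert.1 (hDT hi) with rfl | h'
      exacts [h, h']
    exact hDk (le_trans (Finset.card_le_card hsub) hcardy)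
  have hzi0 : z i0 = x i0 - 1 := by
    have h1 : ¬ z i0 < y i0 := fun h => hi0T (by simp [hT, h])
    have := hley i0
    rw [hyi0] at this h1
    omega
  -- bits of z i0
  obtain ⟨pz1, pz2, pz3⟩ := pred_bits hx0 hbt (fun j hj => hmin j hj i0)
  rw [← hzi0] at pz1 pz2 pz3
  -- off-D piles are unchanged
  have hoffD : ∀ i, i ∉ D → z i = x i := by
    intro i hi
    rw [hD, Finset.mem_filter] at hi
    push_neg at hi
    exact le_antisymm (hle i) (hi (Finset.mem_univ i))
  set E := D.erase i0 with hE
  have hEcard : E.card = k := by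
    rw [hE, Finset.card_erase_of_mem hi0D, hDcard]
    omega
  have hEbound : ∀ (w : Fin n → ℕ) j, ∑ i ∈ E, bit j (w i) ≤ k := by
    intro w j
    calc ∑ i ∈ E, bit j (w i) ≤ ∑ i ∈ E, 1 :=
          Finset.sum_le_sum fun i _ => bit_le_one j (w i)
      _ = k := by rw [Finset.sum_const, smul_eq_mul, mul_one, hEcard]
  have hEc : ∀ i, i ∉ E → i ≠ i0 → z i = x i := by
    intro i hi hne
    refine hoffD i fun hiD => hi ?_
    rw [hE, Finset.mem_erase]
    exact ⟨hne, hiD⟩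
  -- split of the universe: i0, E, rest
  have hDinsert : D = insert i0 E := (Finset.insert_erase hi0D).symm
  have hi0E : i0 ∉ E := fun h => (Finset.mem_erase.1 h).1 rfl
  have hsplitw : ∀ (w : Fin n → ℕ) j,
      ∑ i, bit j (w i) = bit j (w i0) + ∑ i ∈ E, bit j (w i) + ∑ i ∈ Dᶜ, bit j (w i) := by
    intro w j
    rw [← Finset.sum_add_sum_compl D, hDinsert, Finset.sum_insert hi0E]
  have hcompl_eq : ∀ j, ∑ i ∈ Dᶜ, bit j (z i) = ∑ i ∈ Dᶜ, bit j (x i) :=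
    fun j => Finset.sum_congr rfl fun i hi => by rw [hoffD i (Finset.mem_compl.1 hi)]
  -- bit sums for j < t
  have hlowx : ∀ j, j < t → ∑ i, bit j (x i) = 0 :=
    fun j hj => Finset.sum_eq_zero fun i _ => hmin j hj i
  have hlowz : ∀ j, j < t → ∑ i, bit j (z i) = k + 1 := by
    intro j hj
    have h1 : ∑ i ∈ Dᶜ, bit j (z i) = 0 := by
      rw [hcompl_eq j]
      exact Finset.sum_eq_zero fun i hi => hmin j hj i
    have h2 : bit j (z i0) = 1 := pz1 j hj
    have h3 : ∑ i ∈ E, bit j (z i) ≤ k := hEbound z j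
    have h4 := hsplitw z j
    have h5 : (k + 1) ∣ ∑ i, bit j (z i) := hz j
    have h6 : 0 < ∑ i, bit j (z i) := by omega
    have h7 := Nat.le_of_dvd h6 h5
    -- the sum is in [1, k+1] and divisible by k+1, hence k+1
    omega
  -- bit sums equal for j > t
  have hhiz : ∀ j, t < j → ∑ i, bit j (z i) = ∑ i, bit j (x i) := by
    intro j hj
    have hb0 : bit j (z i0) = bit j (x i0) := bit_eq_of_div_eq pz3 hj
    have h4z := hsplitw z j
    have h4x := hsplitw x j
    have hc := hcompl_eq j
    refine dvd_eq_of_close (by omega) (hz j) (hx j) ?_ ?_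
    · have := hEbound z j
      have := hEbound x j
      omega
    · have := hEbound z j
      have := hEbound x j
      omega
  -- at bit t
  have hbt' : ∑ i, bit t (x i) = ∑ i, bit t (z i) + (k + 1) ∨
      ∑ i, bit t (x i) = ∑ i, bit t (z i) := by
    have h4z := hsplitw z t
    have h4x := hsplitw x t
    have hez := hEbound z t
    have hex := hEbound x t
    have hc := hcompl_eq t
    rcases dvd_close_or (m := k + 1) (by omega) (hx t) (hz t)
      (by omega) (by omega) with h | h
    · right; exact h
    · left; exact h
  -- total sums
  obtain ⟨B0, hB0⟩ := exists_bound x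
  set B := B0 + t + 1 with hB
  have hBx : ∀ i, x i < 2 ^ B :=
    fun i => lt_of_lt_of_le (hB0 i) (Nat.pow_le_pow_right (by norm_num) (by omega))
  have hBz : ∀ i, z i < 2 ^ B := fun i => lt_of_le_of_lt (hle i) (hBx i)
  have htB : t + 1 ≤ B := by omega
  have hsx := sum_eq_sum_bits B x hBx
  have hsz := sum_eq_sum_bits B z hBz
  -- split range B at t
  have hrange : ∀ (g : ℕ → ℕ), ∑ j ∈ Finset.range B, g j =
      (∑ j ∈ Finset.range t, g j) + g t + ∑ j ∈ Finset.Ico (t + 1) B, g j := by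
    intro g
    rw [← Finset.sum_range_succ]
    exact (Finset.sum_range_add_sum_Ico g htB).symm
  rw [hrange] at hsx hsz
  have hIco : ∑ j ∈ Finset.Ico (t + 1) B, 2 ^ j * ∑ i, bit j (z i) =
      ∑ j ∈ Finset.Ico (t + 1) B, 2 ^ j * ∑ i, bit j (x i) := by
    refine Finset.sum_congr rfl fun j hj => ?_
    rw [hhiz j (by exact lt_of_lt_of_le (Nat.lt_succ_self t) (Finset.mem_Ico.1 hj).1)]
  have hlowxs : ∑ j ∈ Finset.range t, 2 ^ j * ∑ i, bit j (x i) = 0 :=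
    Finset.sum_eq_zero fun j hj => by rw [hlowx j (Finset.mem_range.1 hj)]; ring
  have hlowzs : ∑ j ∈ Finset.range t, 2 ^ j * ∑ i, bit j (z i) =
      (∑ j ∈ Finset.range t, 2 ^ j) * (k + 1) := by
    rw [Finset.sum_mul]
    exact Finset.sum_congr rfl fun j hj => by rw [hlowz j (Finset.mem_range.1 hj)]
  set G := ∑ j ∈ Finset.range t, (2:ℕ) ^ j with hG
  have hGt : G + 1 = 2 ^ t := sum_two_pow t
  set Hi := ∑ j ∈ Finset.Ico (t + 1) B, 2 ^ j * ∑ i, bit j (x i) with hHi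
  rw [hlowxs] at hsx
  rw [hlowzs, hIco] at hsz
  -- hsx : ∑ x = 0 + 2^t * dxt + Hi ; hsz : ∑ z = G*(k+1) + 2^t * dzt + Hi
  have hltzx : ∑ i, z i < ∑ i, x i :=
    Finset.sum_lt_sum (fun i _ => hle i) ⟨i0, Finset.mem_univ i0, hlt0⟩
  rcases hbt' with hcase | hcase
  · -- dxt = dzt + (k+1) : the good case
    rw [hcase] at hsx
    rw [hsx, hsz, ← hGt]
    ring
  · -- dxt = dzt : contradiction with ∑ z < ∑ x
    exfalso
    rw [hcase] at hsx
    omega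

end MooreAux


namespace MooreAux

lemma move_sum_lt {x y : Fin n → ℕ} (h : MooreMove k x y) : ∑ i, y i < ∑ i, x i := by
  obtain ⟨hle, hne, -⟩ := h
  have : ∃ i, y i < x i := by
    by_contra hc
    push_neg at hc
    exact hne (funext fun i => le_antisymm (hle i) (hc i))
  obtain ⟨i, hi⟩ := this
  exact Finset.sum_lt_sum (fun i _ => hle i) ⟨i, Finset.mem_univ i, hi⟩

/-- The main induction: values of any remoteness function on Moore's NIM. -/
lemma main (hk : 0 < k) (R : (Fin n → ℕ) → ℕ) (hR : IsRemoteness (MooreMove k) R) :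
    ∀ (N : ℕ) (x : Fin n → ℕ), (∑ i, x i) ≤ N →
      (PP k x → Even (R x) ∧ R x = 2 * ((∑ i, x i) / (k + 1))) ∧
      (¬ PP k x → ¬ Even (R x) ∧
        ∃ z, MooreMove k x z ∧ PP k z ∧ R x = 2 * ((∑ i, z i) / (k + 1)) + 1) := by
  intro N
  induction N with
  | zero =>
    intro x hx0
    have hx : ∀ i, x i = 0 := by
      intro i
      have h1 : x i ≤ ∑ i, x i :=
        Finset.single_le_sum (fun i _ => Nat.zero_le (x i)) (Finset.mem_univ i)
      omega
    have hPP : PP k x := by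
      intro j
      have : ∑ i, bit j (x i) = 0 :=
        Finset.sum_eq_zero fun i _ => by rw [hx i]; exact bit_zero j
      rw [this]
      exact dvd_zero _
    have hnomove : ∀ y, ¬ MooreMove k x y := by
      rintro y ⟨hle, hne, -⟩
      exact hne (funext fun i => by have h := hle i; rw [hx i] at h; rw [hx i]; omega)
    have hR0 : R x = 0 := (hR x).1 hnomove
    constructor
    · intro _
      refine ⟨by rw [hR0]; exact Even.zero, ?_⟩
      have : ∑ i, x i = 0 := by omega
      rw [hR0, this]
      simp
    · intro h
      exact absurd hPP h
  | succ N ih =>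
    intro x hxN
    constructor
    · -- P-position case
      intro hP
      by_cases h0 : ∑ i, x i = 0
      · -- terminal
        have hx : ∀ i, x i = 0 := by
          intro i
          have h1 : x i ≤ ∑ i, x i :=
            Finset.single_le_sum (fun i _ => Nat.zero_le (x i)) (Finset.mem_univ i)
          omega
        have hnomove : ∀ y, ¬ MooreMove k x y := by
          rintro y ⟨hle, hne, -⟩
          exact hne (funext fun i => by have h := hle i; rw [hx i] at h; rw [hx i]; omega)
        have hR0 : R x = 0 := (hR x).1 hnomove
        refine ⟨by rw [hR0]; exact Even.zero, ?_⟩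
        rw [hR0, h0]
        simp
      · -- nonterminal P-position
        obtain ⟨q, hq⟩ : (k + 1) ∣ ∑ i, x i := PP_dvd_sum hP
        have hq1 : 1 ≤ q := by
          rcases Nat.eq_zero_or_pos q with rfl | h
          · omega
          · exact h
        -- every move leads to a non-P position with known remoteness
        have hmoves : ∀ y, MooreMove k x y → ¬ PP k y ∧ ¬ Even (R y) ∧
            ∃ z, MooreMove k y z ∧ PP k z ∧ R y = 2 * ((∑ i, z i) / (k + 1)) + 1 := by
          intro y hy
          have hnP : ¬ PP k y := fun hPy =>
            no_PP_move hP hPy hy.1 hy.2.1 hy.2.2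
          have hlt := move_sum_lt hy
          obtain ⟨hodd, z, hmz, hPz, hRy⟩ := (ih y (by omega)).2 hnP
          exact ⟨hnP, hodd, z, hmz, hPz, hRy⟩
        -- bound on remoteness of children
        have hbound : ∀ y, MooreMove k x y → R y + 1 ≤ 2 * q := by
          intro y hy
          obtain ⟨-, -, z, hmz, hPz, hRy⟩ := hmoves y hy
          obtain ⟨qz, hqz⟩ := PP_dvd_sum hPz
          have hltz : ∑ i, z i < ∑ i, x i :=
            lt_trans (move_sum_lt hmz) (move_sum_lt hy)
          have hqzq : qz < q := by
            by_contra hc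
            push_neg at hc
            have : (k+1) * q ≤ (k+1) * qz := Nat.mul_le_mul_left _ hc
            omega
          rw [hRy, hqz, Nat.mul_div_cancel_left _ (by omega : 0 < k + 1)]
          omega
        -- the special move
        have hne : ∃ i, x i ≠ 0 := by
          by_contra hc
          push_neg at hc
          exact h0 (Finset.sum_eq_zero fun i _ => hc i)
        obtain ⟨i0, t, hx0, hbt, hmin⟩ := exists_min_pile hne
        set y0 := Function.update x i0 (x i0 - 1) with hy0
        have hmv0 : MooreMove k x y0 := by
          refine ⟨?_, ?_, ?_⟩
          · intro i
            by_cases h : i = i0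
            · subst h; simp only [hy0, Function.update_self]; omega
            · simp only [hy0, Function.update_of_ne h]; exact le_rfl
          · intro h
            have := congrFun h i0
            simp only [hy0, Function.update_self] at this
            omega
          · have : (Finset.univ.filter fun i => y0 i < x i) = {i0} := by
              ext i
              simp only [Finset.mem_filter, Finset.mem_univ, true_and, Finset.mem_singleton]
              constructor
              · intro hlt
                by_contra h
                rw [hy0, Function.update_of_ne h] at hlt
                omega
              · rintro rfl
                rw [hy0, Function.update_self]
                omega
            rw [this, Finset.card_singleton]
            omega
        -- exact remoteness of the special move
        have hR0 : R y0 = 2 * (q - 1) + 1 := by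
          obtain ⟨-, -, z, hmz, hPz, hRy⟩ := hmoves y0 hmv0
          have hdrop : ∑ i, x i = ∑ i, z i + (k + 1) :=
            stones_drop hk hP hPz hx0 hbt hmin hmz.1 hmz.2.1 hmz.2.2
          have hz : ∑ i, z i = (k + 1) * (q - 1) := by
            have : (k+1) * q = (k+1) * (q-1) + (k+1) := by
              rw [Nat.mul_sub, mul_one]
              have : k + 1 ≤ (k+1) * q := Nat.le_mul_of_pos_right _ (by omega)
              omega
            omega
          rw [hRy, hz, Nat.mul_div_cancel_left _ (by omega : 0 < k + 1)]
        -- apply the third clause of remoteness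
        obtain ⟨y, hmy, hRx, hmax⟩ := (hR x).2.2 ⟨y0, hmv0⟩
          (fun y hy => (hmoves y hy).2.1)
        have h1 := hbound y hmy
        have h2 := hmax y0 hmv0
        have hRxval : R x = 2 * q := by omega
        refine ⟨by rw [hRxval]; exact even_two_mul q, ?_⟩
        rw [hRxval, hq, Nat.mul_div_cancel_left _ (by omega : 0 < k + 1)]
    · -- N-position case
      intro hP
      obtain ⟨y', hle', hne', hcard', hPy'⟩ := exists_PP_move hk hP
      have hmv' : MooreMove k x y' := ⟨hle', hne', hcard'⟩
      have hlt' := move_sum_lt hmv'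
      have hy'even : Even (R y') := ((ih y' (by omega)).1 hPy').1
      obtain ⟨y, hmy, hevy, hRx, -⟩ := (hR x).2.1 ⟨y', hmv', hy'even⟩
      have hlty := move_sum_lt hmy
      have hPy : PP k y := by
        by_contra hc
        exact ((ih y (by omega)).2 hc).1 hevy
      have hRyval := ((ih y (by omega)).1 hPy).2
      refine ⟨?_, y, hmy, hPy, by rw [hRx, hRyval]⟩
      rw [hRx]
      intro h
      exact (Nat.even_add_one.mp h) hevy

end MooreAux

/-- If `x` is a P-position of Moore's NIM game NIM(n,k) (i.e. its Smith
remoteness value is even), then `k+1` divides the total number of stones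
`S(x) = ∑ i, x i` and `R x = 2 S(x) / (k+1)`. -/
theorem moore_remoteness_of_pposition (n k : ℕ) (hk : 0 < k) (hkn : k ≤ n)
    (R : (Fin n → ℕ) → ℕ) (hR : IsRemoteness (MooreMove k) R)
    (x : Fin n → ℕ) (hx : Even (R x)) :
    (k + 1) ∣ (∑ i, x i) ∧ R x = 2 * (∑ i, x i) / (k + 1) := by
  have hmain := MooreAux.main hk R hR (∑ i, x i) x le_rfl
  have hPP : MooreAux.PP k x := by
    by_contra hc
    exact (hmain.2 hc).1 hx
  have hdvd : (k + 1) ∣ ∑ i, x i := MooreAux.PP_dvd_sum hPP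
  refine ⟨hdvd, ?_⟩
  rw [(hmain.1 hPP).2, Nat.mul_div_assoc 2 hdvd]
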